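/- For all m, n, p ∈ ℕ, partition Fin (m+n+p) into three consecutive blocks of sizes m, n, p, and let c_{m,n,p} be the F-linear endomorphism of V_{m+n+p} ⊗[F] V_{m+n+p} acting on pairs of basis vectors indexed in the same block as the correspondingly embedded β_m, β_n, β_p, and by the flip e_a ⊗ e_b ↦ e_b ⊗ e_a whenever a and b lie in different blocks. Then β_{m+n+p} = c_{m,n,p} + (q − q⁻¹) · P_>, where P_> is the endomorphism fixing each basis vector e_a ⊗ e_b with a and b in different blocks and a belonging to a strictly later block than b, and annihilating all other basis vectors. (This three-block crossing decomposition is the matrix specialization of the relation underlying the coassociativity of the Turaev coproduct Δ_f.) -/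

import Mathlib

open scoped TensorProduct

set_option synthInstance.maxHeartbeats 1000000
set_option maxHeartbeats 1000000
noncomputable section

abbrev F : Type := RatFunc ℂ

def q : F := RatFunc.X

abbrev V (N : ℕ) : Type := Fin N → F

def bV (N : ℕ) : Module.Basis (Fin N) F (V N) := Pi.basisFun F (Fin N)

def e {N : ℕ} (i : Fin N) : V N := bV N i

def bVV (N : ℕ) : Module.Basis (Fin N × Fin N) F (V N ⊗[F] V N) :=
  (bV N).tensorProduct (bV N)

/-- The HOMFLY R-matrix β_N. -/
def β (N : ℕ) : V N ⊗[F] V N →ₗ[F] V N ⊗[F] V N :=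
  (bVV N).constr F fun p =>
    if p.1 = p.2 then q • (e p.1 ⊗ₜ[F] e p.1)
    else if p.1 < p.2 then e p.2 ⊗ₜ[F] e p.1
    else e p.2 ⊗ₜ[F] e p.1 + (q - q⁻¹) • (e p.1 ⊗ₜ[F] e p.2)

/-- Linear inclusion induced by a map of index sets. -/
def emb {a N : ℕ} (f : Fin a → Fin N) : V a →ₗ[F] V N :=
  (bV a).constr F fun i => e (f i)

def ι₁ (m n : ℕ) : Fin m → Fin (m + n) := Fin.castAdd n
def ι₂ (m n : ℕ) : Fin n → Fin (m + n) := Fin.natAdd m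

/-- The Levi braiding c_{m,n}. -/
def levi (m n : ℕ) : V (m + n) ⊗[F] V (m + n) →ₗ[F] V (m + n) ⊗[F] V (m + n) :=
  (bVV (m + n)).constr F fun p =>
    if ha : (p.1 : ℕ) < m then
      if hb : (p.2 : ℕ) < m then
        TensorProduct.map (emb (ι₁ m n)) (emb (ι₁ m n))
          (β m (e ⟨p.1, ha⟩ ⊗ₜ[F] e ⟨p.2, hb⟩))
      else e p.2 ⊗ₜ[F] e p.1
    else
      if hb : (p.2 : ℕ) < m then e p.2 ⊗ₜ[F] e p.1
      else
        TensorProduct.map (emb (ι₂ m n)) (emb (ι₂ m n))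
          (β n (e ⟨(p.1 : ℕ) - m, by have := p.1.isLt; omega⟩ ⊗ₜ[F]
                e ⟨(p.2 : ℕ) - m, by have := p.2.isLt; omega⟩))

/-- Partial trace over the second tensor factor. -/
def ptr {N : ℕ} (Φ : V N ⊗[F] V N →ₗ[F] V N ⊗[F] V N) : V N →ₗ[F] V N :=
  (bV N).constr F fun i =>
    ∑ j : Fin N,
      (TensorProduct.rid F (V N))
        (TensorProduct.map LinearMap.id (LinearMap.proj j) (Φ (e i ⊗ₜ[F] e j)))

/-- Quantum integer [n]_q. -/
def qint (n : ℤ) : F := (q ^ n - q ^ (-n)) / (q - q⁻¹)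

/-- Block index of an element of `Fin (m+n+p)` with respect to the partition into
three consecutive blocks of sizes `m`, `n`, `p`. -/
def blk (m n : ℕ) {N : ℕ} (a : Fin N) : ℕ :=
  if (a : ℕ) < m then 0 else if (a : ℕ) < m + n then 1 else 2

/-- Embedding of the first block `Fin m → Fin (m+n+p)`. -/
def j1 (m n p : ℕ) : Fin m → Fin (m + n + p) :=
  fun i => ⟨i, by have := i.isLt; omega⟩

/-- Embedding of the second block `Fin n → Fin (m+n+p)`. -/
def j2 (m n p : ℕ) : Fin n → Fin (m + n + p) :=
  fun i => ⟨m + i, by have := i.isLt; omega⟩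

/-- Embedding of the third block `Fin p → Fin (m+n+p)`. -/
def j3 (m n p : ℕ) : Fin p → Fin (m + n + p) :=
  fun i => ⟨m + n + i, by have := i.isLt; omega⟩

/-- The three-block Levi braiding `c_{m,n,p}`: on pairs of basis vectors indexed in the
same block it acts as the correspondingly embedded `β m`, `β n`, `β p`, and by the flip
on pairs indexed in different blocks. -/
def levi3 (m n p : ℕ) :
    V (m + n + p) ⊗[F] V (m + n + p) →ₗ[F] V (m + n + p) ⊗[F] V (m + n + p) :=
  (bVV (m + n + p)).constr F fun pr =>
    if ha1 : (pr.1 : ℕ) < m then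
      if hb1 : (pr.2 : ℕ) < m then
        TensorProduct.map (emb (j1 m n p)) (emb (j1 m n p))
          (β m (e ⟨pr.1, ha1⟩ ⊗ₜ[F] e ⟨pr.2, hb1⟩))
      else e pr.2 ⊗ₜ[F] e pr.1
    else if ha2 : (pr.1 : ℕ) < m + n then
      if hb2 : m ≤ (pr.2 : ℕ) ∧ (pr.2 : ℕ) < m + n then
        TensorProduct.map (emb (j2 m n p)) (emb (j2 m n p))
          (β n (e ⟨(pr.1 : ℕ) - m, by omega⟩ ⊗ₜ[F] e ⟨(pr.2 : ℕ) - m, by omega⟩))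
      else e pr.2 ⊗ₜ[F] e pr.1
    else
      if hb3 : m + n ≤ (pr.2 : ℕ) then
        TensorProduct.map (emb (j3 m n p)) (emb (j3 m n p))
          (β p (e ⟨(pr.1 : ℕ) - (m + n), by have := pr.1.isLt; omega⟩ ⊗ₜ[F]
                e ⟨(pr.2 : ℕ) - (m + n), by have := pr.2.isLt; omega⟩))
      else e pr.2 ⊗ₜ[F] e pr.1

/-- The projection `P_>` onto the span of basis vectors `e a ⊗ e b` with `a` and `b`
in different blocks and `a` in a strictly later block than `b`. -/
def Pgt (m n p : ℕ) :
    V (m + n + p) ⊗[F] V (m + n + p) →ₗ[F] V (m + n + p) ⊗[F] V (m + n + p) :=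
  (bVV (m + n + p)).constr F fun pr =>
    if blk m n pr.2 < blk m n pr.1 then e pr.1 ⊗ₜ[F] e pr.2 else 0


lemma bVV_eq (N : ℕ) (i j : Fin N) : bVV N (i, j) = e i ⊗ₜ[F] e j :=
  Module.Basis.tensorProduct_apply (bV N) (bV N) i j

lemma emb_e {a N : ℕ} (f : Fin a → Fin N) (i : Fin a) : emb f (e i) = e (f i) :=
  Module.Basis.constr_basis (bV a) F _ i

lemma β_apply (N : ℕ) (i j : Fin N) :
    β N (e i ⊗ₜ[F] e j) =
      if i = j then q • (e i ⊗ₜ[F] e i)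
      else if i < j then e j ⊗ₜ[F] e i
      else e j ⊗ₜ[F] e i + (q - q⁻¹) • (e i ⊗ₜ[F] e j) := by
  conv_lhs => rw [← bVV_eq]
  exact Module.Basis.constr_basis (bVV N) F _ (i, j)

lemma map_emb_β {k N : ℕ} (f : Fin k → Fin N) (hf : StrictMono f) (i j : Fin k) :
    TensorProduct.map (emb f) (emb f) (β k (e i ⊗ₜ[F] e j)) =
      if f i = f j then q • (e (f i) ⊗ₜ[F] e (f i))
      else if f i < f j then e (f j) ⊗ₜ[F] e (f i)
      else e (f j) ⊗ₜ[F] e (f i) + (q - q⁻¹) • (e (f i) ⊗ₜ[F] e (f j)) := by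
  rw [β_apply]
  by_cases h : i = j
  · subst h
    rw [if_pos rfl, if_pos rfl, LinearMap.map_smul, TensorProduct.map_tmul, emb_e]
  · rw [if_neg h, if_neg (fun h' => h (hf.injective h'))]
    by_cases h2 : i < j
    · rw [if_pos h2, if_pos (hf h2), TensorProduct.map_tmul, emb_e, emb_e]
    · rw [if_neg h2, if_neg (fun h' => h2 (hf.lt_iff_lt.mp h')), map_add,
        LinearMap.map_smul, TensorProduct.map_tmul, TensorProduct.map_tmul, emb_e, emb_e]

lemma levi3_apply (m n p : ℕ) (a b : Fin (m + n + p)) :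
    levi3 m n p (e a ⊗ₜ[F] e b) =
      if ha1 : (a : ℕ) < m then
        if hb1 : (b : ℕ) < m then
          TensorProduct.map (emb (j1 m n p)) (emb (j1 m n p))
            (β m (e ⟨a, ha1⟩ ⊗ₜ[F] e ⟨b, hb1⟩))
        else e b ⊗ₜ[F] e a
      else if ha2 : (a : ℕ) < m + n then
        if hb2 : m ≤ (b : ℕ) ∧ (b : ℕ) < m + n then
          TensorProduct.map (emb (j2 m n p)) (emb (j2 m n p))
            (β n (e ⟨(a : ℕ) - m, by omega⟩ ⊗ₜ[F] e ⟨(b : ℕ) - m, by omega⟩))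
        else e b ⊗ₜ[F] e a
      else
        if hb3 : m + n ≤ (b : ℕ) then
          TensorProduct.map (emb (j3 m n p)) (emb (j3 m n p))
            (β p (e ⟨(a : ℕ) - (m + n), by have := a.isLt; omega⟩ ⊗ₜ[F]
                  e ⟨(b : ℕ) - (m + n), by have := b.isLt; omega⟩))
        else e b ⊗ₜ[F] e a := by
  conv_lhs => rw [← bVV_eq]
  exact Module.Basis.constr_basis (bVV (m + n + p)) F _ (a, b)

lemma Pgt_apply (m n p : ℕ) (a b : Fin (m + n + p)) :
    Pgt m n p (e a ⊗ₜ[F] e b) =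
      if blk m n b < blk m n a then e a ⊗ₜ[F] e b else 0 := by
  conv_lhs => rw [← bVV_eq]
  exact Module.Basis.constr_basis (bVV (m + n + p)) F _ (a, b)

/-- The three-block crossing decomposition:
`β (m+n+p) = c_{m,n,p} + (q - q⁻¹) • P_>`. -/
theorem beta_three_block_decomposition (m n p : ℕ) :
    β (m + n + p) = levi3 m n p + (q - q⁻¹) • Pgt m n p := by
  apply (bVV (m + n + p)).ext
  rintro ⟨a, b⟩
  rw [bVV_eq, LinearMap.add_apply, LinearMap.smul_apply, β_apply, levi3_apply, Pgt_apply]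
  by_cases ha1 : (a : ℕ) < m
  · rw [dif_pos ha1]
    by_cases hb1 : (b : ℕ) < m
    · -- both in block 1
      have hblk : ¬ blk m n b < blk m n a := by
        simp only [blk]; split_ifs <;> omega
      rw [dif_pos hb1, if_neg hblk, smul_zero, add_zero]
      have hmono : StrictMono (j1 m n p) := fun i j h => h
      rw [map_emb_β _ hmono]
      have h1 : j1 m n p ⟨a, ha1⟩ = a := rfl
      have h2 : j1 m n p ⟨b, hb1⟩ = b := rfl
      rw [h1, h2]
    · -- a in block 1, b later
      have hblk : ¬ blk m n b < blk m n a := by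
        simp only [blk]; split_ifs <;> omega
      have hne : ¬ a = b := fun h => by rw [h] at ha1; omega
      have hab : a < b := Fin.lt_def.mpr (by omega)
      rw [dif_neg hb1, if_neg hblk, smul_zero, add_zero, if_neg hne, if_pos hab]
  · rw [dif_neg ha1]
    by_cases ha2 : (a : ℕ) < m + n
    · rw [dif_pos ha2]
      by_cases hb2 : m ≤ (b : ℕ) ∧ (b : ℕ) < m + n
      · -- both in block 2
        have hblk : ¬ blk m n b < blk m n a := by
          simp only [blk]; split_ifs <;> omega
        rw [dif_pos hb2, if_neg hblk, smul_zero, add_zero]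
        have hmono : StrictMono (j2 m n p) := fun i j h => by
          simp only [j2, Fin.lt_def] at h ⊢; exact Nat.add_lt_add_left h m
        rw [map_emb_β _ hmono]
        have h1 : j2 m n p ⟨(a : ℕ) - m, by omega⟩ = a :=
          Fin.ext (show m + ((a : ℕ) - m) = (a : ℕ) by omega)
        have h2 : j2 m n p ⟨(b : ℕ) - m, by omega⟩ = b :=
          Fin.ext (show m + ((b : ℕ) - m) = (b : ℕ) by omega)
        rw [h1, h2]
      · rw [dif_neg hb2]
        by_cases hb1 : (b : ℕ) < m
        · -- b in block 1, a in block 2: a > b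
          have hblk : blk m n b < blk m n a := by
            simp only [blk]; split_ifs <;> omega
          have hne : ¬ a = b := fun h => by rw [h] at ha1; omega
          have hab : ¬ a < b := fun h => by rw [Fin.lt_def] at h; omega
          rw [if_pos hblk, if_neg hne, if_neg hab]
        · -- b in block 3, a in block 2: a < b
          have hblk : ¬ blk m n b < blk m n a := by
            simp only [blk]; split_ifs <;> omega
          have hne : ¬ a = b := fun h => by rw [h] at ha2; omega
          have hab : a < b := Fin.lt_def.mpr (by omega)
          rw [if_neg hblk, smul_zero, add_zero, if_neg hne, if_pos hab]
    · rw [dif_neg ha2]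
      by_cases hb3 : m + n ≤ (b : ℕ)
      · -- both in block 3
        have hblk : ¬ blk m n b < blk m n a := by
          simp only [blk]; split_ifs <;> omega
        rw [dif_pos hb3, if_neg hblk, smul_zero, add_zero]
        have hmono : StrictMono (j3 m n p) := fun i j h => by
          simp only [j3, Fin.lt_def] at h ⊢; exact Nat.add_lt_add_left h (m + n)
        rw [map_emb_β _ hmono]
        have h1 : j3 m n p ⟨(a : ℕ) - (m + n), by have := a.isLt; omega⟩ = a :=
          Fin.ext (show m + n + ((a : ℕ) - (m + n)) = (a : ℕ) by omega)
        have h2 : j3 m n p ⟨(b : ℕ) - (m + n), by have := b.isLt; omega⟩ = b :=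
          Fin.ext (show m + n + ((b : ℕ) - (m + n)) = (b : ℕ) by omega)
        rw [h1, h2]
      · -- a in block 3, b earlier: a > b
        have hblk : blk m n b < blk m n a := by
          simp only [blk]; split_ifs <;> omega
        have hne : ¬ a = b := fun h => by rw [h] at ha2; omega
        have hab : ¬ a < b := fun h => by rw [Fin.lt_def] at h; omega
        rw [dif_neg hb3, if_pos hblk, if_neg hne, if_neg hab]

end
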